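/- Let 0 < α < 2 < β. For all λ ∈ (0,1), the quantity αλ² − 2λ^α − α + 2 is positive, and the inequality (β/(2−αλ^(2−α)))·(λ^(2−α) + ((β−α−2)/α)·λ^(β−α)) ≤ (2λ^β − βλ² − 2 + β)/(αλ² − 2λ^α − α + 2) holds. -/

import Mathlib

theorem g1_ineq (α β : ℝ) (hα : 0 < α) (hα2 : α < 2) (hβ : 2 < β) :
    ∀ lam : ℝ, 0 < lam → lam < 1 →
      0 < α * lam ^ (2:ℝ) - 2 * lam ^ α - α + 2 ∧
      (β / (2 - α * lam ^ (2 - α))) *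
          (lam ^ (2 - α) + ((β - α - 2) / α) * lam ^ (β - α)) ≤
        (2 * lam ^ β - β * lam ^ (2:ℝ) - 2 + β) /
          (α * lam ^ (2:ℝ) - 2 * lam ^ α - α + 2) := by
  intro lam hl0 hl1
  have hβ0 : (0:ℝ) < β := by linarith
  have hu : 0 < lam ^ α := Real.rpow_pos_of_pos hl0 α
  have hlog : Real.log lam < 0 := Real.log_neg hl0 hl1
  -- Part 1 : A > 0 via strict convexity of exp
  have hA : 0 < α * lam ^ (2:ℝ) - 2 * lam ^ α - α + 2 := by
    have hx : lam ^ α = Real.exp (Real.log lam * α) := Real.rpow_def_of_pos hl0 α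
    have hy : lam ^ (2:ℝ) = Real.exp (Real.log lam * 2) := Real.rpow_def_of_pos hl0 2
    have hne : Real.log lam * 2 ≠ (0:ℝ) := ne_of_lt (by linarith)
    have hc := strictConvexOn_exp.2 (Set.mem_univ (Real.log lam * 2)) (Set.mem_univ (0:ℝ))
      hne (show 0 < α/2 by linarith) (show 0 < 1 - α/2 by linarith) (by ring)
    simp only [smul_eq_mul, mul_zero, add_zero, Real.exp_zero, mul_one] at hc
    have he : α/2 * (Real.log lam * 2) = Real.log lam * α := by ring
    rw [he, ← hx, ← hy] at hc
    linarith
  refine ⟨hA, ?_⟩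
  have hw1 : lam ^ (2-α) < 1 := Real.rpow_lt_one hl0.le hl1 (by linarith)
  have hwpos : 0 < lam ^ (2-α) := Real.rpow_pos_of_pos hl0 _
  have hD1 : 0 < 2 - α * lam ^ (2-α) := by nlinarith
  -- the auxiliary function G
  have hder : ∀ x ∈ Set.Ioo lam 1,
      HasDerivAt (fun x : ℝ => 2*α*(β-2) - 2*α*(β-α)*x^(2-α) - β*(2-α)*(β-α-2)*x^(β-α)
          + 2*(β-2)*(β-α)*x^β - α*(β-2)*(β-α)*x^(β+2-α))
        (0 - 2*α*(β-α)*((2-α)*x^(2-α-1)) - β*(2-α)*(β-α-2)*((β-α)*x^(β-α-1))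
          + 2*(β-2)*(β-α)*(β*x^(β-1)) - α*(β-2)*(β-α)*((β+2-α)*x^(β+2-α-1))) x := by
    intro x hx
    have hx0 : 0 < x := hl0.trans hx.1
    exact ((((hasDerivAt_const x (2*α*(β-2))).sub
      ((Real.hasDerivAt_rpow_const (Or.inl hx0.ne')).const_mul (2*α*(β-α)))).sub
      ((Real.hasDerivAt_rpow_const (Or.inl hx0.ne')).const_mul (β*(2-α)*(β-α-2)))).add
      ((Real.hasDerivAt_rpow_const (Or.inl hx0.ne')).const_mul (2*(β-2)*(β-α)))).sub
      ((Real.hasDerivAt_rpow_const (Or.inl hx0.ne')).const_mul (α*(β-2)*(β-α)))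
  have hanti : AntitoneOn (fun x : ℝ => 2*α*(β-2) - 2*α*(β-α)*x^(2-α) - β*(2-α)*(β-α-2)*x^(β-α)
      + 2*(β-2)*(β-α)*x^β - α*(β-2)*(β-α)*x^(β+2-α)) (Set.Icc lam 1) := by
    apply antitoneOn_of_deriv_nonpos (convex_Icc lam 1)
    · have hc : ∀ c : ℝ, ContinuousOn (fun x : ℝ => x ^ c) (Set.Icc lam 1) :=
        fun c => continuousOn_id.rpow_const (fun x hx => Or.inl (ne_of_gt (lt_of_lt_of_le hl0 hx.1)))
      exact (((continuousOn_const.sub (continuousOn_const.mul (hc (2-α)))).sub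
        (continuousOn_const.mul (hc (β-α)))).add
        (continuousOn_const.mul (hc β))).sub (continuousOn_const.mul (hc (β+2-α)))
    · intro x hx
      rw [interior_Icc] at hx
      exact ((hder x hx).differentiableAt).differentiableWithinAt
    · intro x hx
      rw [interior_Icc] at hx
      rw [(hder x hx).deriv]
      have hx0 : 0 < x := hl0.trans hx.1
      have hP : 0 < x ^ (β-2) := Real.rpow_pos_of_pos hx0 _
      have hx2 : 0 < x ^ (2:ℝ) := Real.rpow_pos_of_pos hx0 _
      have E1 : x^(β-α-1) = x^(2-α-1) * x^(β-2) := by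
        rw [← Real.rpow_add hx0]; congr 1; ring
      have E2 : x^(β-1) = x^(2-α-1) * (x^(β-2) * x^α) := by
        rw [← Real.rpow_add hx0, ← Real.rpow_add hx0]; congr 1; ring
      have E3 : x^(β+2-α-1) = x^(2-α-1) * (x^(β-2) * x^(2:ℝ)) := by
        rw [← Real.rpow_add hx0, ← Real.rpow_add hx0]; congr 1; ring
      have E4 : x^(β-2) * x^(2:ℝ) = x^β := by
        rw [← Real.rpow_add hx0]; congr 1; ring
      have hAM1 : x^α ≤ α/2 * x^(2:ℝ) + (1 - α/2) := by
        have h := Real.geom_mean_le_arith_mean2_weighted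
          (show (0:ℝ) ≤ 1 - α/2 by linarith) (show (0:ℝ) ≤ α/2 by linarith)
          zero_le_one hx2.le (by ring)
        rw [Real.one_rpow, one_mul, ← Real.rpow_mul hx0.le] at h
        have e : (2:ℝ)*(α/2) = α := by ring
        rw [e] at h
        linarith
      have hAM2 : β * x^(β-2) ≤ 2 + (β-2)*(x^(β-2)*x^(2:ℝ)) := by
        have h := Real.geom_mean_le_arith_mean2_weighted
          (div_nonneg (by norm_num) hβ0.le) (div_nonneg (by linarith) hβ0.le)
          zero_le_one (Real.rpow_pos_of_pos hx0 β).le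
          (show 2/β + (β-2)/β = 1 by field_simp; ring)
        rw [Real.one_rpow, one_mul, ← Real.rpow_mul hx0.le] at h
        have e : β*((β-2)/β) = β - 2 := by field_simp
        rw [e, ← E4] at h
        have h2 := mul_le_mul_of_nonneg_left h hβ0.le
        have e2 : β * (2/β*1 + (β-2)/β * (x^(β-2)*x^(2:ℝ)))
            = 2 + (β-2)*(x^(β-2)*x^(2:ℝ)) := by field_simp
        rw [e2] at h2
        exact h2
      have i1 := mul_le_mul_of_nonneg_left hAM1
        (mul_nonneg (show (0:ℝ) ≤ 2*β*(β-2) by nlinarith) hP.le)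
      have i2 := mul_le_mul_of_nonneg_left hAM2
        (mul_nonneg hα.le (show (0:ℝ) ≤ 2-α by linarith))
      have hfact : 0 - 2*α*(β-α)*((2-α)*x^(2-α-1)) - β*(2-α)*(β-α-2)*((β-α)*x^(β-α-1))
          + 2*(β-2)*(β-α)*(β*x^(β-1)) - α*(β-2)*(β-α)*((β+2-α)*x^(β+2-α-1))
          = ((β-α)*x^(2-α-1)) * (-(2*α*(2-α)) - β*(2-α)*(β-α-2)*x^(β-2)
            + 2*β*(β-2)*(x^(β-2)*x^α) - α*(β-2)*(β+2-α)*(x^(β-2)*x^(2:ℝ))) := by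
        rw [E1, E2, E3]; ring
      rw [hfact]
      apply mul_nonpos_iff.mpr
      refine Or.inl ⟨mul_nonneg (by linarith) (Real.rpow_pos_of_pos hx0 _).le, ?_⟩
      nlinarith [i1, i2]
  -- G(lam) ≥ 0
  have h10 := hanti (Set.mem_Icc.mpr ⟨le_refl lam, hl1.le⟩)
    (Set.mem_Icc.mpr ⟨hl1.le, le_refl 1⟩) hl1.le
  simp only [Real.one_rpow] at h10
  have hGlam : 0 ≤ 2*α*(β-2) - 2*α*(β-α)*lam^(2-α) - β*(2-α)*(β-α-2)*lam^(β-α)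
      + 2*(β-2)*(β-α)*lam^β - α*(β-2)*(β-α)*lam^(β+2-α) := by linarith [h10]
  -- transfer to the key polynomial inequality
  have e1 : lam^α * lam^(2-α) = lam^(2:ℝ) := by
    rw [← Real.rpow_add hl0]; congr 1; ring
  have e2 : lam^α * lam^(β-α) = lam^β := by
    rw [← Real.rpow_add hl0]; congr 1; ring
  have e4 : lam^(β+2-α) = lam^β * lam^(2-α) := by
    rw [← Real.rpow_add hl0]; congr 1; ring
  have hid : α*(2*lam^β - β*lam^(2:ℝ) - 2 + β)*(2*lam^α - α*lam^(2:ℝ))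
      - β*(α*lam^(2:ℝ) + (β-α-2)*lam^β)*(α*lam^(2:ℝ) - 2*lam^α - α + 2)
      = lam^α * (2*α*(β-2) - 2*α*(β-α)*lam^(2-α) - β*(2-α)*(β-α-2)*lam^(β-α)
        + 2*(β-2)*(β-α)*lam^β - α*(β-2)*(β-α)*lam^(β+2-α)) := by
    linear_combination (2*α*(β-α) + α*(β-2)*(β-α)*lam^β) * e1
      + (β*(2-α)*(β-α-2)) * e2 + (α*(β-2)*(β-α)*lam^α) * e4
  have hkey : β*(α*lam^(2:ℝ) + (β-α-2)*lam^β)*(α*lam^(2:ℝ) - 2*lam^α - α + 2)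
      ≤ α*(2*lam^β - β*lam^(2:ℝ) - 2 + β)*(2*lam^α - α*lam^(2:ℝ)) := by
    linarith [hid, mul_nonneg hu.le hGlam]
  -- rewrite the goal and conclude
  rw [show lam^(2:ℝ) = lam^α * lam^(2-α) from e1.symm,
      show lam^β = lam^α * lam^(β-α) from e2.symm] at hkey ⊢
  have hA' : 0 < α * (lam^α * lam^(2-α)) - 2 * lam ^ α - α + 2 := by
    rw [e1]; exact hA
  rw [div_mul_eq_mul_div, div_le_div_iff₀ hD1 hA']
  refine le_of_mul_le_mul_right ?_ (mul_pos hα hu)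
  have eq1 : β * (lam^(2-α) + (β-α-2)/α * lam^(β-α))
        * (α * (lam^α * lam^(2-α)) - 2 * lam^α - α + 2) * (α * lam^α)
      = β*(α*(lam^α*lam^(2-α)) + (β-α-2)*(lam^α*lam^(β-α)))
        * (α*(lam^α*lam^(2-α)) - 2*lam^α - α + 2) := by
    field_simp
  have eq2 : α*(2*(lam^α*lam^(β-α)) - β*(lam^α*lam^(2-α)) - 2 + β)
        *(2*lam^α - α*(lam^α*lam^(2-α)))
      = (2*(lam^α*lam^(β-α)) - β*(lam^α*lam^(2-α)) - 2 + β)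
        * (2 - α * lam^(2-α)) * (α * lam^α) := by ring
  rw [eq1, ← eq2]
  exact hkey
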